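/- Let t > −1, let m, k be positive integers, and let φ : (0,1) → [0,∞] be measurable. Then, as identities in [0,∞]: (i) ∫_0^1 r^{m+k−1}·(1−r)^{t+1}·𝓖^{(t)}_m φ(r) dr = (1/k)·𝓕^{(t)}_{m+k}φ(0); (ii) 𝓕^{(t)}_{m+k}(𝓖^{(t)}_m φ)(0) = ∑_{j=0}^∞ (1/(k+j))·𝓕^{(t)}_{m+k+j}φ(0); (iii) for every s ∈ [0,1), 𝓕^{(t)}_m φ(s) = 𝓕^{(t)}_m ψ(s) + 𝓕^{(t)}_{m+1}φ(s), where ψ(r) = (1−r)·φ(r); and (iv) 𝓕^{(t)}_m 1(0) = B(m, t+1), where B is the Euler Beta function. -/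

import Mathlib

open MeasureTheory Set

/-- `𝓕^{(t)}_m φ(s) = ∫_s^1 r^{m−1} φ(r) (1−r)^t dr`, for `φ : (0,1) → [0,∞]`,
with values in `[0,∞]`. -/
noncomputable def FtE (t : ℝ) (m : ℕ) (φ : ℝ → ENNReal) (s : ℝ) : ENNReal :=
  ∫⁻ r in Set.Ioo s 1, ENNReal.ofReal (r ^ (m - 1) * (1 - r) ^ t) * φ r

/-- `𝓖^{(t)}_m φ(s) = 𝓕^{(t)}_m φ(s) / (s^m (1−s)^{t+1})`, with values in `[0,∞]`. -/
noncomputable def GtE (t : ℝ) (m : ℕ) (φ : ℝ → ENNReal) (s : ℝ) : ENNReal :=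
  FtE t m φ s / ENNReal.ofReal (s ^ m * (1 - s) ^ (t + 1))

/-- Basic identities for the operations `𝓕^{(t)}_m` and `𝓖^{(t)}_m`, as identities
in `[0,∞]`:
(i) `∫_0^1 r^{m+k−1}(1−r)^{t+1} 𝓖^{(t)}_m φ(r) dr = (1/k) 𝓕^{(t)}_{m+k}φ(0)`;
(ii) `𝓕^{(t)}_{m+k}(𝓖^{(t)}_m φ)(0) = ∑_{j≥0} (1/(k+j)) 𝓕^{(t)}_{m+k+j}φ(0)`;
(iii) `𝓕^{(t)}_m φ = 𝓕^{(t)}_m ((1−·)φ) + 𝓕^{(t)}_{m+1}φ` on `[0,1)`;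
(iv) `𝓕^{(t)}_m 1(0) = B(m, t+1)`. -/
lemma FtE_anti (t : ℝ) (m : ℕ) (φ : ℝ → ENNReal) : Antitone (FtE t m φ) := by
  intro a b hab
  exact lintegral_mono_set (Ioo_subset_Ioo_left hab)

lemma FtE_meas (t : ℝ) (m : ℕ) (φ : ℝ → ENNReal) : Measurable (FtE t m φ) :=
  (FtE_anti t m φ).measurable

lemma g_meas (t : ℝ) (m : ℕ) (φ : ℝ → ENNReal) (hφ : Measurable φ) :
    Measurable fun r => ENNReal.ofReal (r ^ (m-1) * (1-r) ^ t) * φ r := by fun_prop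

lemma swap_lem (f g : ℝ → ENNReal) (hf : Measurable f) (hg : Measurable g) :
    ∫⁻ r in Ioo (0:ℝ) 1, f r * ∫⁻ ρ in Ioo r 1, g ρ
      = ∫⁻ ρ in Ioo (0:ℝ) 1, (∫⁻ r in Ioo 0 ρ, f r) * g ρ := by
  set h : ℝ × ℝ → ENNReal := fun p => if p.1 < p.2 then f p.1 * g p.2 else 0 with hh
  have hmeas : Measurable h :=
    Measurable.ite (measurableSet_lt measurable_fst measurable_snd)
      ((hf.comp measurable_fst).mul (hg.comp measurable_snd)) measurable_const
  have L : ∫⁻ r in Ioo (0:ℝ) 1, f r * ∫⁻ ρ in Ioo r 1, g ρ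
      = ∫⁻ r in Ioo (0:ℝ) 1, ∫⁻ ρ in Ioo (0:ℝ) 1, h (r, ρ) := by
    refine setLIntegral_congr_fun measurableSet_Ioo ?_
    intro r hr
    beta_reduce
    rw [← lintegral_const_mul _ hg]
    have : Ioo r 1 = Ioi r ∩ Ioo (0:ℝ) 1 := by
      ext x; constructor
      · rintro ⟨h1, h2⟩; exact ⟨h1, ⟨hr.1.trans h1, h2⟩⟩
      · rintro ⟨h3, ⟨_, h2⟩⟩; exact ⟨h3, h2⟩
    rw [this, ← Measure.restrict_restrict measurableSet_Ioi]
    rw [← lintegral_indicator measurableSet_Ioi]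
    refine setLIntegral_congr_fun measurableSet_Ioo ?_
    intro ρ hρ
    simp only [indicator, mem_Ioi, hh]
  have R : ∫⁻ ρ in Ioo (0:ℝ) 1, (∫⁻ r in Ioo 0 ρ, f r) * g ρ
      = ∫⁻ ρ in Ioo (0:ℝ) 1, ∫⁻ r in Ioo (0:ℝ) 1, h (r, ρ) := by
    refine setLIntegral_congr_fun measurableSet_Ioo ?_
    intro ρ hρ
    beta_reduce
    rw [← lintegral_mul_const _ hf]
    have : Ioo (0:ℝ) ρ = Iio ρ ∩ Ioo (0:ℝ) 1 := by
      ext x; constructor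
      · rintro ⟨h1, h2⟩; exact ⟨h2, ⟨h1, h2.trans hρ.2⟩⟩
      · rintro ⟨h3, ⟨h1, _⟩⟩; exact ⟨h1, h3⟩
    rw [this, ← Measure.restrict_restrict measurableSet_Iio]
    rw [← lintegral_indicator measurableSet_Iio]
    refine setLIntegral_congr_fun measurableSet_Ioo ?_
    intro r hr
    simp only [indicator, mem_Iio, hh]
  rw [L, R]
  exact lintegral_lintegral_swap (hmeas.aemeasurable)

lemma pow_int (k : ℕ) (hk : 1 ≤ k) {ρ : ℝ} (h0 : 0 ≤ ρ) :
    ∫⁻ r in Ioo (0:ℝ) ρ, ENNReal.ofReal (r ^ (k-1)) = ENNReal.ofReal (ρ ^ k / k) := by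
  rw [← ofReal_integral_eq_lintegral_ofReal]
  · congr 1
    rw [← MeasureTheory.integral_Ioc_eq_integral_Ioo, ← intervalIntegral.integral_of_le h0,
      integral_pow]
    have h1 : k - 1 + 1 = k := Nat.sub_add_cancel hk
    rw [h1]
    have h2 : ((k : ℝ) - 1 + 1 : ℝ) = k := by ring
    rw [zero_pow (by omega), Nat.cast_sub hk]
    push_cast
    rw [h2]
    ring
  · exact (intervalIntegral.intervalIntegrable_pow _).1.mono_set Ioo_subset_Ioc_self
  · filter_upwards [ae_restrict_mem measurableSet_Ioo] with x hx
    have := hx.1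
    positivity

lemma lemA (t : ℝ) (m k : ℕ) (hm : 1 ≤ m) (hk : 1 ≤ k) (φ : ℝ → ENNReal)
    (hφ : Measurable φ) :
    ∫⁻ r in Ioo (0:ℝ) 1, ENNReal.ofReal (r ^ (k-1)) * FtE t m φ r
      = (k : ENNReal)⁻¹ * FtE t (m+k) φ 0 := by
  have hs := swap_lem (fun r => ENNReal.ofReal (r^(k-1)))
    (fun ρ => ENNReal.ofReal (ρ^(m-1)*(1-ρ)^t) * φ ρ) (by fun_prop) (g_meas t m φ hφ)
  unfold FtE
  rw [hs]
  rw [← lintegral_const_mul _ (g_meas t (m+k) φ hφ)]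
  refine setLIntegral_congr_fun measurableSet_Ioo ?_
  intro ρ hρ
  beta_reduce
  rw [pow_int k hk hρ.1.le]
  have hkpos : (0:ℝ) < k := by exact_mod_cast hk
  rw [ENNReal.ofReal_div_of_pos hkpos, ENNReal.ofReal_natCast, div_eq_mul_inv]
  have key : ENNReal.ofReal (ρ^k) * ENNReal.ofReal (ρ^(m-1)*(1-ρ)^t)
      = ENNReal.ofReal (ρ^(m+k-1)*(1-ρ)^t) := by
    rw [← ENNReal.ofReal_mul (pow_nonneg hρ.1.le _)]
    congr 1
    rw [← mul_assoc, ← pow_add]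
    congr 2
    omega
  calc ENNReal.ofReal (ρ^k) * (↑k)⁻¹ * (ENNReal.ofReal (ρ^(m-1)*(1-ρ)^t) * φ ρ)
      = (↑k)⁻¹ * (ENNReal.ofReal (ρ^k) * ENNReal.ofReal (ρ^(m-1)*(1-ρ)^t) * φ ρ) := by ring
    _ = (↑k)⁻¹ * (ENNReal.ofReal (ρ^(m+k-1)*(1-ρ)^t) * φ ρ) := by rw [key]

lemma partI (t : ℝ) (ht : -1 < t) (m k : ℕ) (hm : 1 ≤ m) (hk : 1 ≤ k)
    (φ : ℝ → ENNReal) (hφ : Measurable φ) :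
    (∫⁻ r in Set.Ioo (0 : ℝ) 1,
        ENNReal.ofReal (r ^ (m + k - 1) * (1 - r) ^ (t + 1)) * GtE t m φ r)
      = (k : ENNReal)⁻¹ * FtE t (m + k) φ 0 := by
  rw [← lemA t m k hm hk φ hφ]
  refine setLIntegral_congr_fun measurableSet_Ioo ?_
  intro r hr
  obtain ⟨hr0, hr1⟩ := hr
  have h1r : (0:ℝ) < 1 - r := by linarith
  have hc : (0:ℝ) < r ^ m * (1 - r) ^ (t+1) :=
    mul_pos (pow_pos hr0 _) (Real.rpow_pos_of_pos h1r _)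
  have hsplit : r ^ (m + k - 1) * (1 - r) ^ (t + 1)
      = r ^ (k - 1) * (r ^ m * (1 - r) ^ (t + 1)) := by
    rw [← mul_assoc, ← pow_add]
    congr 2
    omega
  beta_reduce
  rw [GtE, hsplit, ENNReal.ofReal_mul (pow_nonneg hr0.le _), mul_assoc,
    ENNReal.mul_div_cancel (by simp [hc]) ENNReal.ofReal_ne_top]

lemma partII (t : ℝ) (ht : -1 < t) (m k : ℕ) (hm : 1 ≤ m) (hk : 1 ≤ k)
    (φ : ℝ → ENNReal) (hφ : Measurable φ) :
    FtE t (m + k) (GtE t m φ) 0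
      = ∑' j : ℕ, ((k : ENNReal) + (j : ENNReal))⁻¹ * FtE t (m + k + j) φ 0 := by
  have step1 : FtE t (m + k) (GtE t m φ) 0
      = ∫⁻ r in Ioo (0:ℝ) 1, ∑' j : ℕ, ENNReal.ofReal (r ^ (k + j - 1)) * FtE t m φ r := by
    unfold FtE GtE
    refine setLIntegral_congr_fun measurableSet_Ioo ?_
    intro r hr
    obtain ⟨hr0, hr1⟩ := hr
    have h1r : (0:ℝ) < 1 - r := by linarith
    have hc : (0:ℝ) < r ^ m * (1 - r) ^ (t+1) :=
      mul_pos (pow_pos hr0 _) (Real.rpow_pos_of_pos h1r _)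
    have ratio : ENNReal.ofReal (r ^ (m + k - 1) * (1 - r) ^ t)
          / ENNReal.ofReal (r ^ m * (1 - r) ^ (t + 1))
        = ENNReal.ofReal (r ^ (k - 1) / (1 - r)) := by
      rw [← ENNReal.ofReal_div_of_pos hc]
      congr 1
      have hrpow : (1-r) ^ (t+1) = (1-r) ^ t * (1-r) := by
        rw [Real.rpow_add h1r, Real.rpow_one]
      have hpow : r ^ (m + k - 1) = r ^ (k - 1) * r ^ m := by
        rw [← pow_add]; congr 1; omega
      rw [hrpow, hpow]
      rw [div_eq_div_iff (by positivity) h1r.ne']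
      ring
    have geom : (ENNReal.ofReal (1 - r))⁻¹ = ∑' j : ℕ, ENNReal.ofReal r ^ j := by
      have : ENNReal.ofReal (1 - r) = 1 - ENNReal.ofReal r := by
        rw [ENNReal.ofReal_sub _ hr0.le, ENNReal.ofReal_one]
      rw [this, ENNReal.tsum_geometric]
    calc ENNReal.ofReal (r ^ (m + k - 1) * (1 - r) ^ t)
          * (FtE t m φ r / ENNReal.ofReal (r ^ m * (1 - r) ^ (t + 1)))
        = (ENNReal.ofReal (r ^ (m + k - 1) * (1 - r) ^ t)
          / ENNReal.ofReal (r ^ m * (1 - r) ^ (t + 1))) * FtE t m φ r := by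
          rw [div_eq_mul_inv, div_eq_mul_inv]; ring
      _ = ENNReal.ofReal (r ^ (k - 1) / (1 - r)) * FtE t m φ r := by rw [ratio]
      _ = ENNReal.ofReal (r ^ (k - 1)) * (∑' j : ℕ, ENNReal.ofReal r ^ j) * FtE t m φ r := by
          rw [ENNReal.ofReal_div_of_pos h1r, div_eq_mul_inv, geom]
      _ = ∑' j : ℕ, ENNReal.ofReal (r ^ (k + j - 1)) * FtE t m φ r := by
          rw [← ENNReal.tsum_mul_left, ← ENNReal.tsum_mul_right]
          refine tsum_congr fun j => ?_
          rw [← ENNReal.ofReal_pow hr0.le, ← ENNReal.ofReal_mul (pow_nonneg hr0.le _),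
            ← pow_add, show k - 1 + j = k + j - 1 by omega]
  rw [step1, lintegral_tsum (f := fun j r => ENNReal.ofReal (r ^ (k + j - 1)) * FtE t m φ r) fun j => ((by fun_prop :
      Measurable fun r : ℝ => ENNReal.ofReal (r ^ (k + j - 1))).mul
      (FtE_meas t m φ)).aemeasurable]
  refine tsum_congr fun j => ?_
  rw [lemA t m (k + j) hm (by omega) φ hφ]
  congr 1
  · push_cast; ring
  · rw [add_assoc]

lemma partIII (t : ℝ) (m : ℕ) (hm : 1 ≤ m) (φ : ℝ → ENNReal) (hφ : Measurable φ) :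
    ∀ s ∈ Set.Ico (0 : ℝ) 1,
      FtE t m φ s = FtE t m (fun r => ENNReal.ofReal (1 - r) * φ r) s
        + FtE t (m + 1) φ s := by
  intro s hs
  unfold FtE
  rw [← lintegral_add_left (by fun_prop)]
  refine setLIntegral_congr_fun measurableSet_Ioo ?_
  intro r hr
  have hr0 : (0:ℝ) < r := lt_of_le_of_lt hs.1 hr.1
  have h1r : (0:ℝ) < 1 - r := by linarith [hr.2]
  have hA : (0:ℝ) ≤ r ^ (m-1) * (1-r) ^ t := by positivity
  refine Eq.symm ?_
  show ENNReal.ofReal (r ^ (m-1) * (1-r) ^ t) * (ENNReal.ofReal (1 - r) * φ r)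
        + ENNReal.ofReal (r ^ (m+1-1) * (1-r) ^ t) * φ r = _
  calc ENNReal.ofReal (r ^ (m-1) * (1-r) ^ t) * (ENNReal.ofReal (1 - r) * φ r)
        + ENNReal.ofReal (r ^ (m+1-1) * (1-r) ^ t) * φ r
      = (ENNReal.ofReal (r ^ (m-1) * (1-r) ^ t * (1-r))
          + ENNReal.ofReal (r ^ (m+1-1) * (1-r) ^ t)) * φ r := by
        rw [ENNReal.ofReal_mul hA, add_mul, mul_assoc]
    _ = ENNReal.ofReal (r ^ (m-1) * (1-r) ^ t * (1-r) + r ^ (m+1-1) * (1-r) ^ t) * φ r := by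
        rw [ENNReal.ofReal_add (by positivity) (by positivity)]
    _ = ENNReal.ofReal (r ^ (m-1) * (1-r) ^ t) * φ r := by
        congr 2
        have h5 : r ^ (m+1-1) = r ^ (m-1) * r := by
          rw [← pow_succ]
          congr 1
          omega
        rw [h5]
        ring

lemma partIV (t : ℝ) (ht : -1 < t) (m : ℕ) (hm : 1 ≤ m) :
    FtE t m (fun _ => (1:ENNReal)) 0
      = ENNReal.ofReal (Real.Gamma m * Real.Gamma (t + 1) / Real.Gamma (m + t + 1)) := by
  have hm1 : (1:ℝ) ≤ (m:ℝ) := by exact_mod_cast hm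
  set g : ℝ → ℝ := fun x => x ^ (m-1) * (1-x) ^ t with hg
  have hu : 0 < Complex.re (m:ℂ) := by simp; positivity
  have hv : 0 < Complex.re ((t:ℂ)+1) := by simp; linarith
  have hFg : ∀ x ∈ Icc (0:ℝ) 1,
      (x:ℂ) ^ ((m:ℂ)-1) * ((1:ℂ)-x) ^ (((t:ℂ)+1)-1) = ((g x : ℝ) : ℂ) := by
    intro x hx
    have c1 : (x:ℂ) ^ ((m:ℂ)-1) = ((x ^ (m-1 : ℕ) : ℝ) : ℂ) := by
      rw [show ((m:ℂ)-1) = (((m-1:ℕ) : ℝ) : ℂ) by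
            rw [Nat.cast_sub hm]; push_cast; ring,
        ← Complex.ofReal_cpow hx.1, Real.rpow_natCast]
    have c2 : ((1:ℂ)-x) ^ (((t:ℂ)+1)-1) = (((1-x) ^ t : ℝ) : ℂ) := by
      rw [show (((t:ℂ)+1)-1) = ((t:ℝ):ℂ) by push_cast; ring,
        show ((1:ℂ)-(x:ℂ)) = (((1-x:ℝ)):ℂ) by push_cast; ring,
        ← Complex.ofReal_cpow (by linarith [hx.2] : (0:ℝ) ≤ 1 - x)]
    rw [c1, c2, ← Complex.ofReal_mul]
  have hbeta : Complex.betaIntegral (m:ℂ) ((t:ℂ)+1) = ((∫ x in (0:ℝ)..1, g x : ℝ) : ℂ) := by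
    rw [Complex.betaIntegral, ← intervalIntegral.integral_ofReal]
    refine intervalIntegral.integral_congr fun x hx => ?_
    rw [uIcc_of_le zero_le_one] at hx
    exact hFg x hx
  have hint : IntervalIntegrable g volume 0 1 := by
    have h := (Complex.betaIntegral_convergent hu hv).1
    rw [intervalIntegrable_iff_integrableOn_Ioc_of_le zero_le_one]
    refine IntegrableOn.congr_fun h.re ?_ measurableSet_Ioc
    intro x hx
    have h6 := hFg x ⟨hx.1.le, hx.2⟩
    simp only [RCLike.re_to_complex, h6, Complex.ofReal_re]
  have hGpos : 0 < Real.Gamma ((m:ℝ) + t + 1) := Real.Gamma_pos_of_pos (by linarith)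
  have hval : ∫ x in (0:ℝ)..1, g x
      = Real.Gamma m * Real.Gamma (t+1) / Real.Gamma ((m:ℝ)+t+1) := by
    have hGamma := Complex.Gamma_mul_Gamma_eq_betaIntegral hu hv
    rw [hbeta] at hGamma
    rw [show ((m:ℂ)+((t:ℂ)+1)) = (((m+t+1 : ℝ)) : ℂ) by push_cast; ring] at hGamma
    rw [show ((t:ℂ)+1) = (((t+1 : ℝ)) : ℂ) by push_cast; ring] at hGamma
    rw [show ((m:ℂ)) = (((m:ℝ)) : ℂ) by push_cast; ring] at hGamma
    rw [Complex.Gamma_ofReal, Complex.Gamma_ofReal, Complex.Gamma_ofReal,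
      ← Complex.ofReal_mul, ← Complex.ofReal_mul, Complex.ofReal_inj] at hGamma
    rw [eq_div_iff hGpos.ne']
    linarith [hGamma]
  unfold FtE
  simp only [mul_one]
  have hIoo : IntegrableOn g (Ioo 0 1) volume :=
    ((intervalIntegrable_iff_integrableOn_Ioc_of_le zero_le_one).mp hint).mono_set
      Ioo_subset_Ioc_self
  rw [← ofReal_integral_eq_lintegral_ofReal hIoo ?nn]
  case nn =>
    filter_upwards [ae_restrict_mem measurableSet_Ioo] with x hx
    have hx1 : (0:ℝ) < x := hx.1
    have hx2 : (0:ℝ) < 1 - x := by linarith [hx.2]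
    positivity
  congr 1
  rw [← MeasureTheory.integral_Ioc_eq_integral_Ioo, ← intervalIntegral.integral_of_le zero_le_one,
    hval]

theorem stmt9 (t : ℝ) (ht : -1 < t) (m k : ℕ) (hm : 1 ≤ m) (hk : 1 ≤ k)
    (φ : ℝ → ENNReal) (hφ : Measurable φ) :
    ((∫⁻ r in Set.Ioo (0 : ℝ) 1,
        ENNReal.ofReal (r ^ (m + k - 1) * (1 - r) ^ (t + 1)) * GtE t m φ r)
      = (k : ENNReal)⁻¹ * FtE t (m + k) φ 0) ∧
    (FtE t (m + k) (GtE t m φ) 0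
      = ∑' j : ℕ, ((k : ENNReal) + (j : ENNReal))⁻¹ * FtE t (m + k + j) φ 0) ∧
    (∀ s ∈ Set.Ico (0 : ℝ) 1,
      FtE t m φ s = FtE t m (fun r => ENNReal.ofReal (1 - r) * φ r) s
        + FtE t (m + 1) φ s) ∧
    (FtE t m (fun _ => 1) 0
      = ENNReal.ofReal (Real.Gamma m * Real.Gamma (t + 1) / Real.Gamma (m + t + 1))) :=
  ⟨partI t ht m k hm hk φ hφ, partII t ht m k hm hk φ hφ,
   partIII t m hm φ hφ, partIV t ht m hm⟩
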